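/- Let m ≥ 1 and N = 2^m, and let S ∈ ℝ^{N×N} be the DST matrix with entries S_{k,n} = sin(π·(n+1/2)·(k+1)/N). Then there exist butterfly matrices B₁, B₂ ∈ ℂ^{N×N} (each a product M_0 · M_1 ⋯ M_{m−1} of butterfly factors, where (M_k)_{i,j} = 0 whenever i ≠ j and the bitwise XOR of i and j is not equal to 2^{m−1−k}) and permutation matrices P₁, P₂ such that S equals the entrywise real part of the complex matrix B₁ · P₁ · B₂ · P₂. That is, the DST lies in the class (BP)² up to taking the entrywise real part. -/

import Mathlib

/-- `M ∈ 𝔽^{2^m × 2^m}` is a *butterfly factor at level `k`* (`0 ≤ k < m`) if `M_{i,j} = 0`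
whenever `i ≠ j` and the bitwise XOR of `i` and `j` is not `2^(m−1−k)`. -/
def IsButterflyFactor {𝔽 : Type*} [Zero 𝔽] (m k : ℕ)
    (M : Matrix (Fin (2 ^ m)) (Fin (2 ^ m)) 𝔽) : Prop :=
  ∀ i j : Fin (2 ^ m), i ≠ j → Nat.xor (i : ℕ) (j : ℕ) ≠ 2 ^ (m - 1 - k) → M i j = 0

/-- A *butterfly matrix* is a product `M_0 · M_1 ⋯ M_{m−1}` where each `M_k` is a butterfly
factor at level `k`. -/
def IsButterflyMatrix {𝔽 : Type*} [Semiring 𝔽] (m : ℕ)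
    (B : Matrix (Fin (2 ^ m)) (Fin (2 ^ m)) 𝔽) : Prop :=
  ∃ M : Fin m → Matrix (Fin (2 ^ m)) (Fin (2 ^ m)) 𝔽,
    (∀ k : Fin m, IsButterflyFactor m (k : ℕ) (M k)) ∧ B = (List.ofFn M).prod

noncomputable def ph (t x : ℕ) : ℂ :=
  Complex.exp (((-2 * Real.pi * (x : ℝ) / 2 ^ t : ℝ) : ℂ) * Complex.I)

lemma ph_zero (t : ℕ) : ph t 0 = 1 := by simp [ph]

lemma ph_add (t a b : ℕ) : ph t (a + b) = ph t a * ph t b := by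
  rw [ph, ph, ph, ← Complex.exp_add]
  congr 1
  push_cast
  ring

lemma ph_mul_pow (t c : ℕ) : ph t (2 ^ t * c) = 1 := by
  have h2 : (2 : ℝ) ^ t ≠ 0 := by positivity
  have : ((-2 * Real.pi * ((2 ^ t * c : ℕ) : ℝ) / 2 ^ t : ℝ) : ℂ) * Complex.I
      = ((-c : ℤ) : ℂ) * (2 * Real.pi * Complex.I) := by
    push_cast
    field_simp
  rw [ph, this, Complex.exp_int_mul_two_pi_mul_I]

lemma ph_congr (t : ℕ) {a b : ℕ} (h : a % 2 ^ t = b % 2 ^ t) : ph t a = ph t b := by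
  have ha : a = a % 2 ^ t + 2 ^ t * (a / 2 ^ t) := by
    rw [Nat.mod_add_div]
  have hb : b = b % 2 ^ t + 2 ^ t * (b / 2 ^ t) := by
    rw [Nat.mod_add_div]
  rw [ha, hb, ph_add, ph_add, ph_mul_pow, ph_mul_pow, h]

lemma ph_double (t x : ℕ) : ph (t + 1) (2 * x) = ph t x := by
  rw [ph, ph]
  congr 2
  push_cast
  have h2 : (2 : ℝ) ^ t ≠ 0 := by positivity
  field_simp
  ring

def rev : ℕ → ℕ → ℕ
  | 0, _ => 0
  | t + 1, x => x / 2 ^ t % 2 + 2 * rev t x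

lemma rev_lt (t x : ℕ) : rev t x < 2 ^ t := by
  induction t with
  | zero => simp [rev]
  | succ t ih =>
    have h1 : x / 2 ^ t % 2 < 2 := Nat.mod_lt _ (by norm_num)
    have h2 : (2:ℕ) ^ (t+1) = 2 ^ t * 2 := pow_succ 2 t
    rw [rev]
    omega

lemma rev_congr (t : ℕ) : ∀ {x y : ℕ}, x % 2 ^ t = y % 2 ^ t → rev t x = rev t y := by
  induction t with
  | zero => simp [rev]
  | succ t ih =>
    intro x y h
    have hd : (2 : ℕ) ^ t ∣ 2 ^ (t + 1) := pow_dvd_pow 2 (by omega)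
    have hlow : x % 2 ^ t = y % 2 ^ t := by
      rw [← Nat.mod_mod_of_dvd x hd, ← Nat.mod_mod_of_dvd y hd, h]
    have hx : x / 2 ^ t % 2 = x % 2 ^ (t + 1) / 2 ^ t := by
      rw [← Nat.mod_mul_right_div_self, ← pow_succ]
    have hy : y / 2 ^ t % 2 = y % 2 ^ (t + 1) / 2 ^ t := by
      rw [← Nat.mod_mul_right_div_self, ← pow_succ]
    rw [rev, rev, ih hlow, hx, hy, h]

lemma rev_high (t : ℕ) {a b : ℕ} (ha : a < 2 ^ t) (hb : b ≤ 1) :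
    rev (t + 1) (a + 2 ^ t * b) = b + 2 * rev t a := by
  have h1 : (a + 2 ^ t * b) / 2 ^ t % 2 = b := by
    rw [Nat.add_mul_div_left _ _ (pow_pos (by norm_num) t)]
    rw [Nat.div_eq_of_lt ha]
    omega
  have h2 : rev t (a + 2 ^ t * b) = rev t a := by
    apply rev_congr
    simp [Nat.add_mul_mod_self_left]
  rw [rev, h1, h2]

lemma rev_split (t : ℕ) (r : ℕ) (hr : r < 2 ^ (t + 1)) :
    rev (t + 1) r = r / 2 ^ t + 2 * rev t (r % 2 ^ t) := by
  have hrab : r = r % 2 ^ t + 2 ^ t * (r / 2 ^ t) := (Nat.mod_add_div r (2 ^ t)).symm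
  have halt : r % 2 ^ t < 2 ^ t := Nat.mod_lt _ (pow_pos (by norm_num) t)
  have hble : r / 2 ^ t ≤ 1 := by
    have h2 : r / 2 ^ t < 2 := Nat.div_lt_of_lt_mul (by rw [← pow_succ]; exact hr)
    omega
  conv_lhs => rw [hrab]
  exact rev_high t halt hble

lemma rev_low (t : ℕ) : ∀ {r c : ℕ}, r < 2 ^ t → c ≤ 1 →
    rev (t + 1) (c + 2 * r) = c * 2 ^ t + rev t r := by
  induction t with
  | zero =>
    intro r c hr hc
    interval_cases r
    interval_cases c <;> simp [rev]
  | succ t ih =>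
    intro r c hr hc
    have hp : (2:ℕ) ^ (t+1) = 2 ^ t * 2 := pow_succ 2 t
    have hrab : r = r % 2 ^ t + 2 ^ t * (r / 2 ^ t) := (Nat.mod_add_div r (2 ^ t)).symm
    have halt : r % 2 ^ t < 2 ^ t := Nat.mod_lt _ (pow_pos (by norm_num) t)
    have hble : r / 2 ^ t ≤ 1 := by
      have h2 : r / 2 ^ t < 2 := Nat.div_lt_of_lt_mul (by rw [← pow_succ]; exact hr)
      omega
    have key : c + 2 * r = (c + 2 * (r % 2 ^ t)) + 2 ^ (t + 1) * (r / 2 ^ t) := by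
      conv_lhs => rw [hrab]
      ring
    have hca : c + 2 * (r % 2 ^ t) < 2 ^ (t + 1) := by omega
    rw [key, rev_high (t + 1) hca hble, ih halt hc, rev_split t r hr]
    ring
lemma rev_rev (t : ℕ) : ∀ {x : ℕ}, x < 2 ^ t → rev t (rev t x) = x := by
  induction t with
  | zero => intro x hx; interval_cases x; simp [rev]
  | succ t ih =>
    intro x hx
    have halt : x % 2 ^ t < 2 ^ t := Nat.mod_lt _ (pow_pos (by norm_num) t)
    have hble : x / 2 ^ t ≤ 1 := by
      have h2 : x / 2 ^ t < 2 := Nat.div_lt_of_lt_mul (by rw [← pow_succ]; exact hx)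
      omega
    rw [rev_split t x hx, rev_low t (rev_lt t (x % 2 ^ t)) hble, ih halt]
    exact Nat.div_add_mod' x (2 ^ t)

lemma decomp (p i : ℕ) :
    i = 2 ^ (p + 1) * (i / 2 ^ (p + 1)) + 2 ^ p * (i / 2 ^ p % 2) + i % 2 ^ p := by
  have h1 : i = 2 ^ (p + 1) * (i / 2 ^ (p + 1)) + i % 2 ^ (p + 1) :=
    (Nat.div_add_mod i (2 ^ (p + 1))).symm
  have h2 : i % 2 ^ (p + 1) = 2 ^ p * (i % 2 ^ (p + 1) / 2 ^ p) + i % 2 ^ (p + 1) % 2 ^ p :=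
    (Nat.div_add_mod (i % 2 ^ (p + 1)) (2 ^ p)).symm
  have h3 : i % 2 ^ (p + 1) % 2 ^ p = i % 2 ^ p :=
    Nat.mod_mod_of_dvd i (pow_dvd_pow 2 (by omega))
  have h4 : i % 2 ^ (p + 1) / 2 ^ p = i / 2 ^ p % 2 := by
    rw [← Nat.mod_mul_right_div_self, ← pow_succ]
  rw [h4] at h2
  omega

lemma xor_eq {p i j : ℕ} (h1 : i / 2 ^ (p + 1) = j / 2 ^ (p + 1))
    (h2 : i % 2 ^ p = j % 2 ^ p) (h3 : i ≠ j) : i ^^^ j = 2 ^ p := by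
  have hbit : ∀ t, t ≠ p → i.testBit t = j.testBit t := by
    intro t ht
    rcases lt_or_gt_of_ne ht with hlt | hgt
    · have hd : (2:ℕ) ^ (t+1) ∣ 2 ^ p := pow_dvd_pow 2 (by omega)
      rw [Nat.testBit_eq_decide_div_mod_eq, Nat.testBit_eq_decide_div_mod_eq]
      have hi : i / 2 ^ t % 2 = i % 2 ^ p % 2 ^ (t + 1) / 2 ^ t := by
        rw [Nat.mod_mod_of_dvd i hd, ← Nat.mod_mul_right_div_self, ← pow_succ]
      have hj : j / 2 ^ t % 2 = j % 2 ^ p % 2 ^ (t + 1) / 2 ^ t := by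
        rw [Nat.mod_mod_of_dvd j hd, ← Nat.mod_mul_right_div_self, ← pow_succ]
      rw [hi, hj, h2]
    · have hi : i / 2 ^ t = i / 2 ^ (p + 1) / 2 ^ (t - (p + 1)) := by
        rw [Nat.div_div_eq_div_mul, ← pow_add]
        congr 2
        omega
      have hj : j / 2 ^ t = j / 2 ^ (p + 1) / 2 ^ (t - (p + 1)) := by
        rw [Nat.div_div_eq_div_mul, ← pow_add]
        congr 2
        omega
      rw [Nat.testBit_eq_decide_div_mod_eq, Nat.testBit_eq_decide_div_mod_eq, hi, hj, h1]
  have hbp : i.testBit p ≠ j.testBit p := by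
    intro hp
    apply h3
    have hmid : i / 2 ^ p % 2 = j / 2 ^ p % 2 := by
      have := hp
      rw [Nat.testBit_eq_decide_div_mod_eq, Nat.testBit_eq_decide_div_mod_eq] at this
      rcases Nat.mod_two_eq_zero_or_one (i / 2 ^ p) with h | h <;>
        rcases Nat.mod_two_eq_zero_or_one (j / 2 ^ p) with h' | h' <;>
        simp [h, h'] at this ⊢
    calc i = 2 ^ (p + 1) * (i / 2 ^ (p + 1)) + 2 ^ p * (i / 2 ^ p % 2) + i % 2 ^ p :=
        decomp p i
      _ = 2 ^ (p + 1) * (j / 2 ^ (p + 1)) + 2 ^ p * (j / 2 ^ p % 2) + j % 2 ^ p := by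
        rw [h1, h2, hmid]
      _ = j := (decomp p j).symm
  apply Nat.eq_of_testBit_eq
  intro t
  rw [Nat.testBit_xor, Nat.testBit_two_pow]
  by_cases ht : t = p
  · subst ht
    simp only [decide_eq_true_eq]
    rcases Bool.eq_false_or_eq_true (i.testBit t) with h | h <;>
      rcases Bool.eq_false_or_eq_true (j.testBit t) with h' | h' <;>
      simp_all
  · rw [hbit t ht]
    simp [Ne.symm ht]

noncomputable def gmat (m s : ℕ) : Matrix (Fin (2 ^ m)) (Fin (2 ^ m)) ℂ :=
  Matrix.of fun i j =>
    if (i : ℕ) / 2 ^ (m - 1 - s + 1) = (j : ℕ) / 2 ^ (m - 1 - s + 1) ∧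
        (i : ℕ) % 2 ^ (m - 1 - s) = (j : ℕ) % 2 ^ (m - 1 - s) then
      (if (j : ℕ) / 2 ^ (m - 1 - s) % 2 = 0 then 1
       else ph (m - 1 - s + 1) ((i : ℕ) % 2 ^ (m - 1 - s + 1) + 1))
    else 0

noncomputable def Rmat (m s : ℕ) : Matrix (Fin (2 ^ m)) (Fin (2 ^ m)) ℂ :=
  Matrix.of fun i j =>
    if (i : ℕ) / 2 ^ (m - s) = (j : ℕ) / 2 ^ (m - s) then
      ph (m - s) (((i : ℕ) + 1) * rev (m - s) (j : ℕ))
    else 0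

lemma core (m s : ℕ) (hs : s < m) : gmat m s * Rmat m (s + 1) = Rmat m s := by
  ext i j
  rw [Matrix.mul_apply]
  have hpos : 0 < (2 : ℕ) ^ (m - 1 - s) := pow_pos (by norm_num) _
  simp only [gmat, Rmat, Matrix.of_apply,
    show m - (s + 1) = m - 1 - s from by omega, show m - s = m - 1 - s + 1 from by omega]
  set p := m - 1 - s with hp
  have hdd : ∀ x : ℕ, x / 2 ^ p / 2 = x / 2 ^ (p + 1) := fun x => by
    rw [Nat.div_div_eq_div_mul, ← pow_succ]
  by_cases h : (i : ℕ) / 2 ^ (p + 1) = (j : ℕ) / 2 ^ (p + 1)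
  · -- main case
    have hp2m : (2:ℕ) ^ p * 2 ^ (m - p) = 2 ^ m := by rw [← pow_add]; congr 1; omega
    have hjd : (j : ℕ) / 2 ^ p < 2 ^ (m - p) :=
      Nat.div_lt_of_lt_mul (by rw [hp2m]; exact j.isLt)
    have himod : (i : ℕ) % 2 ^ p < 2 ^ p := Nat.mod_lt _ hpos
    have hl0lt : (i : ℕ) % 2 ^ p + (j : ℕ) / 2 ^ p * 2 ^ p < 2 ^ m := by
      have h1 : (j : ℕ) / 2 ^ p * 2 ^ p ≤ (2 ^ (m - p) - 1) * 2 ^ p :=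
        Nat.mul_le_mul_right _ (by omega)
      have h2 : ((2:ℕ) ^ (m - p) - 1) * 2 ^ p = 2 ^ m - 2 ^ p := by
        rw [Nat.sub_mul, one_mul, mul_comm, hp2m]
      have h3 : (2:ℕ) ^ p ≤ 2 ^ m := Nat.pow_le_pow_right (by norm_num) (by omega)
      omega
    set l₀ : Fin (2 ^ m) := ⟨(i : ℕ) % 2 ^ p + (j : ℕ) / 2 ^ p * 2 ^ p, hl0lt⟩ with hl₀
    have hl0val : (l₀ : ℕ) = (i : ℕ) % 2 ^ p + (j : ℕ) / 2 ^ p * 2 ^ p := rfl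
    have hl0mod : (l₀ : ℕ) % 2 ^ p = (i : ℕ) % 2 ^ p := by
      rw [hl0val, Nat.add_mul_mod_self_right, Nat.mod_mod_of_dvd _ dvd_rfl]
    have hl0div : (l₀ : ℕ) / 2 ^ p = (j : ℕ) / 2 ^ p := by
      rw [hl0val, Nat.add_mul_div_right _ _ hpos, Nat.div_eq_of_lt himod, Nat.zero_add]
    have hl0div2 : (l₀ : ℕ) / 2 ^ (p + 1) = (i : ℕ) / 2 ^ (p + 1) := by
      rw [← hdd, hl0div, hdd, h]
    rw [Finset.sum_eq_single l₀]
    · rw [if_pos ⟨hl0div2.symm, hl0mod.symm⟩, if_pos hl0div, if_pos h, hl0div]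
      have hrevj : rev (p + 1) (j : ℕ) = (j : ℕ) / 2 ^ p % 2 + 2 * rev p (j : ℕ) := rfl
      have key2 : ph p (((l₀ : ℕ) + 1) * rev p (j : ℕ))
          = ph p (((i : ℕ) + 1) * rev p (j : ℕ)) :=
        ph_congr p ((Nat.ModEq.add_right 1 hl0mod).mul_right (rev p (j : ℕ)))
      rw [key2, hrevj, Nat.mul_add,
        show ((i : ℕ) + 1) * (2 * rev p (j : ℕ)) = 2 * (((i : ℕ) + 1) * rev p (j : ℕ)) from by
          ring]
      conv_rhs => rw [ph_add, ph_double]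
      by_cases hb : (j : ℕ) / 2 ^ p % 2 = 0
      · rw [if_pos hb, hb, Nat.mul_zero, ph_zero, one_mul]
      · rw [if_neg hb, show (j : ℕ) / 2 ^ p % 2 = 1 from by omega, Nat.mul_one]
        congr 1
        exact ph_congr (p + 1) (Nat.ModEq.add_right 1 (Nat.mod_modEq _ _))
    · intro l _ hne
      by_cases c1 : (i : ℕ) / 2 ^ (p + 1) = (l : ℕ) / 2 ^ (p + 1) ∧
          (i : ℕ) % 2 ^ p = (l : ℕ) % 2 ^ p
      · by_cases c2 : (l : ℕ) / 2 ^ p = (j : ℕ) / 2 ^ p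
        · exfalso
          apply hne
          apply Fin.ext
          rw [hl0val, c1.2, ← c2]
          exact (Nat.mod_add_div' (l : ℕ) (2 ^ p)).symm
        · rw [if_neg c2, mul_zero]
      · rw [if_neg c1, zero_mul]
    · intro hnm
      exact absurd (Finset.mem_univ l₀) hnm
  · -- off-diagonal-block case
    rw [if_neg h]
    apply Finset.sum_eq_zero
    intro l _
    by_cases c1 : (i : ℕ) / 2 ^ (p + 1) = (l : ℕ) / 2 ^ (p + 1) ∧
        (i : ℕ) % 2 ^ p = (l : ℕ) % 2 ^ p
    · by_cases c2 : (l : ℕ) / 2 ^ p = (j : ℕ) / 2 ^ p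
      · exfalso
        apply h
        rw [c1.1, ← hdd, c2, hdd]
      · rw [if_neg c2, mul_zero]
    · rw [if_neg c1, zero_mul]

lemma re_aux (r : ℝ) : (-Complex.I * Complex.exp ((r : ℂ) * Complex.I)).re = Real.sin r := by
  have h : ∀ w : ℂ, (-Complex.I * w).re = w.im := by
    intro w
    simp [Complex.mul_re]
  rw [h, Complex.exp_mul_I]
  simp [Complex.add_im, Complex.mul_im, Complex.sin_ofReal_re, Complex.cos_ofReal_im]

lemma exp_comb (a b : ℝ) :
    Complex.exp ((a : ℂ) * Complex.I) * Complex.exp ((b : ℂ) * Complex.I)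
      = Complex.exp (((a + b : ℝ) : ℂ) * Complex.I) := by
  rw [← Complex.exp_add]
  push_cast
  ring_nf


section DSTAux

-- the permutation pieces
def tau (m n : ℕ) : ℕ :=
  if n % 2 = 0 then (if n = 0 then 0 else 2 ^ m - n / 2) else n / 2 + 1

def tauInv (m x : ℕ) : ℕ :=
  if x = 0 then 0 else if x ≤ 2 ^ (m - 1) then 2 * x - 1 else 2 * (2 ^ m - x)

lemma two_pow_split (m : ℕ) (hm : 1 ≤ m) : (2 : ℕ) ^ m = 2 * 2 ^ (m - 1) := by
  rw [← pow_succ']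
  congr 1
  omega

lemma tau_lt {m : ℕ} (hm : 1 ≤ m) {n : ℕ} (hn : n < 2 ^ m) : tau m n < 2 ^ m := by
  have h := two_pow_split m hm
  unfold tau
  split_ifs <;> omega

lemma tauInv_lt {m : ℕ} (hm : 1 ≤ m) {x : ℕ} (hx : x < 2 ^ m) : tauInv m x < 2 ^ m := by
  have h := two_pow_split m hm
  unfold tauInv
  split_ifs <;> omega

lemma tauInv_tau {m : ℕ} (hm : 1 ≤ m) {n : ℕ} (hn : n < 2 ^ m) : tauInv m (tau m n) = n := by
  have h := two_pow_split m hm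
  unfold tau tauInv
  split_ifs <;> (try contradiction) <;> omega

lemma tau_tauInv {m : ℕ} (hm : 1 ≤ m) {x : ℕ} (hx : x < 2 ^ m) : tau m (tauInv m x) = x := by
  have h := two_pow_split m hm
  unfold tau tauInv
  split_ifs <;> (try contradiction) <;> omega

def sigE (m : ℕ) (hm : 1 ≤ m) : Equiv.Perm (Fin (2 ^ m)) where
  toFun n := ⟨rev m (tau m (n : ℕ)), rev_lt m _⟩
  invFun j := ⟨tauInv m (rev m (j : ℕ)), tauInv_lt hm (rev_lt m _)⟩
  left_inv n := by
    apply Fin.ext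
    simp only
    rw [rev_rev m (tau_lt hm n.isLt), tauInv_tau hm n.isLt]
  right_inv j := by
    apply Fin.ext
    simp only
    rw [tau_tauInv hm (rev_lt m _), rev_rev m j.isLt]

-- butterfly factor properties
lemma gmat_factor (m s : ℕ) : IsButterflyFactor m s (gmat m s) := by
  intro i j hne hxor
  rw [gmat, Matrix.of_apply, if_neg]
  rintro ⟨hc1, hc2⟩
  exact hxor (xor_eq hc1 hc2 (fun hc => hne (Fin.ext hc)))

noncomputable def Mfac (m : ℕ) (d : Fin (2 ^ m) → ℂ) (s : ℕ) :
    Matrix (Fin (2 ^ m)) (Fin (2 ^ m)) ℂ :=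
  if s = m - 1 then gmat m s * Matrix.diagonal d else gmat m s

lemma Mfac_factor (m : ℕ) (d : Fin (2 ^ m) → ℂ) (s : ℕ) :
    IsButterflyFactor m s (Mfac m d s) := by
  intro i j hne hxor
  unfold Mfac
  split_ifs with h
  · rw [Matrix.mul_diagonal, gmat_factor m s i j hne hxor, zero_mul]
  · exact gmat_factor m s i j hne hxor

lemma Rmat_top (m : ℕ) : Rmat m m = 1 := by
  ext i j
  simp only [Rmat, Matrix.of_apply, Nat.sub_self, pow_zero, Nat.div_one]
  by_cases hij : i = j
  · subst hij
    simp [Matrix.one_apply, rev, ph_zero]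
  · have hv : (i : ℕ) ≠ (j : ℕ) := fun hc => hij (Fin.ext hc)
    simp [Matrix.one_apply, hij, hv]

lemma prod_Mfac (m : ℕ) (hm : 1 ≤ m) (d : Fin (2 ^ m) → ℂ) :
    ∀ k, 1 ≤ k → k ≤ m →
      (List.ofFn (fun t : Fin k => Mfac m d (m - k + (t : ℕ)))).prod
        = Rmat m (m - k) * Matrix.diagonal d := by
  intro k
  induction k with
  | zero => omega
  | succ k ih =>
    intro _ hkm
    rw [List.ofFn_succ, List.prod_cons]
    have hz : m - (k + 1) + ((0 : Fin (k + 1)) : ℕ) = m - (k + 1) := by simp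
    rw [hz]
    by_cases hk : k = 0
    · subst hk
      simp only [List.ofFn_zero, List.prod_nil, mul_one]
      have hM : Mfac m d (m - 1) = gmat m (m - 1) * Matrix.diagonal d := by
        rw [Mfac, if_pos rfl]
      have hg : gmat m (m - 1) = Rmat m (m - 1) := by
        have hc := core m (m - 1) (by omega)
        rwa [show m - 1 + 1 = m from by omega, Rmat_top m, mul_one] at hc
      rw [show m - (0 + 1) = m - 1 from by omega, hM, hg]
    · have hk1 : 1 ≤ k := by omega
      have hM : Mfac m d (m - (k + 1)) = gmat m (m - (k + 1)) := by
        rw [Mfac, if_neg (by omega)]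
      have htail : (fun t : Fin k => Mfac m d (m - (k + 1) + ((t.succ : Fin (k + 1)) : ℕ)))
          = fun t : Fin k => Mfac m d (m - k + (t : ℕ)) := by
        funext t
        have hv : ((t.succ : Fin (k + 1)) : ℕ) = (t : ℕ) + 1 := Fin.val_succ t
        rw [hv, show m - (k + 1) + ((t : ℕ) + 1) = m - k + (t : ℕ) from by omega]
      rw [hM, htail, ih hk1 (by omega), ← mul_assoc,
        show m - k = (m - (k + 1)) + 1 from by omega, core m (m - (k + 1)) (by omega)]

end DSTAux

lemma sigE_val (m : ℕ) (hm : 1 ≤ m) (n : Fin (2 ^ m)) :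
    ((sigE m hm n : Fin (2 ^ m)) : ℕ) = rev m (tau m (n : ℕ)) := rfl

noncomputable def Ddiag (m : ℕ) : Fin (2 ^ m) → ℂ := fun k =>
  -Complex.I * Complex.exp (((Real.pi * ((k : ℕ) + 1) / 2 ^ (m + 1) : ℝ) : ℂ) * Complex.I)

noncomputable def dvec (m : ℕ) : Fin (2 ^ m) → ℂ := fun j =>
  if 1 ≤ rev m (j : ℕ) ∧ rev m (j : ℕ) ≤ 2 ^ (m - 1) then -1 else 1

set_option maxHeartbeats 1000000 in
lemma entry_eq (m : ℕ) (hm : 1 ≤ m) (k n : Fin (2 ^ m)) :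
    Real.sin (Real.pi * ((n : ℕ) + 1 / 2) * ((k : ℕ) + 1) / (2 ^ m : ℕ))
      = ((Matrix.diagonal (Ddiag m) * (Rmat m 0 * Matrix.diagonal (dvec m))) k
          (sigE m hm n)).re := by
  have hsplit := two_pow_split m hm
  set j : Fin (2 ^ m) := sigE m hm n with hjdef
  have hjval : (j : ℕ) = rev m (tau m (n : ℕ)) := sigE_val m hm n
  have htlt : tau m (n : ℕ) < 2 ^ m := tau_lt hm n.isLt
  have hrj : rev m (j : ℕ) = tau m (n : ℕ) := by rw [hjval, rev_rev m htlt]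
  rw [Matrix.diagonal_mul, Matrix.mul_diagonal]
  have hR : Rmat m 0 k j = ph m (((k : ℕ) + 1) * tau m (n : ℕ)) := by
    simp only [Rmat, Matrix.of_apply, Nat.sub_zero]
    rw [Nat.div_eq_of_lt k.isLt, Nat.div_eq_of_lt j.isLt, if_pos rfl, hrj]
  rw [hR]
  have hdv : dvec m j
      = if 1 ≤ tau m (n : ℕ) ∧ tau m (n : ℕ) ≤ 2 ^ (m - 1) then (-1 : ℂ) else 1 := by
    simp only [dvec, hrj]
  rw [hdv]
  -- abbreviations
  set K : ℕ := (k : ℕ) with hK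
  set A : ℝ := Real.pi * (K + 1) / 2 ^ (m + 1) with hA
  rcases Nat.mod_two_eq_zero_or_one (n : ℕ) with hpar | hpar
  · -- n even
    obtain ⟨n', hn'⟩ : ∃ n', (n : ℕ) = 2 * n' := ⟨(n : ℕ) / 2, by omega⟩
    by_cases hz : n' = 0
    · -- n = 0
      have htau : tau m (n : ℕ) = 0 := by unfold tau; split_ifs <;> omega
      rw [htau, if_neg (by omega), Nat.mul_zero, ph_zero, one_mul, mul_one]
      have : Ddiag m k = -Complex.I * Complex.exp ((A : ℂ) * Complex.I) := rfl
      rw [this, re_aux]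
      congr 1
      rw [hA, pow_succ, hn', hz]
      push_cast
      have h2 : (2 : ℝ) ^ m ≠ 0 := by positivity
      field_simp
      ring
    · -- n = 2n', n' ≥ 1
      have htau : tau m (n : ℕ) = 2 ^ m - n' := by unfold tau; split_ifs <;> omega
      have hn'le : n' ≤ 2 ^ (m - 1) - 1 := by omega
      rw [htau, if_neg (by omega), mul_one]
      set B : ℝ := -2 * Real.pi * (((K + 1) * (2 ^ m - n') : ℕ) : ℝ) / 2 ^ m with hB
      have hphv : ph m ((K + 1) * (2 ^ m - n')) = Complex.exp ((B : ℂ) * Complex.I) := rfl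
      have hDv : Ddiag m k = -Complex.I * Complex.exp ((A : ℂ) * Complex.I) := rfl
      rw [hphv, hDv, mul_assoc (-Complex.I), exp_comb, re_aux]
      have hAB : A + B = Real.pi * ((n : ℕ) + 1 / 2) * (K + 1) / ((2 ^ m : ℕ) : ℝ)
          + (((-(K : ℤ) - 1) : ℤ) : ℝ) * (2 * Real.pi) := by
        rw [hA, hB, hn']
        have hc : (((K + 1) * (2 ^ m - n') : ℕ) : ℝ) = (K + 1) * ((2 : ℝ) ^ m - n') := by
          push_cast [Nat.cast_sub (show n' ≤ 2 ^ m by omega)]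
          ring
        rw [hc]
        push_cast
        rw [pow_succ]
        have h2 : (2 : ℝ) ^ m ≠ 0 := by positivity
        field_simp
        ring
      rw [hAB]
      exact (Real.sin_add_int_mul_two_pi _ _).symm
  · -- n odd
    obtain ⟨n', hn'⟩ : ∃ n', (n : ℕ) = 2 * n' + 1 := ⟨(n : ℕ) / 2, by omega⟩
    have htau : tau m (n : ℕ) = n' + 1 := by unfold tau; split_ifs <;> omega
    have hle : n' + 1 ≤ 2 ^ (m - 1) := by omega
    rw [htau, if_pos ⟨by omega, hle⟩]
    set B : ℝ := -2 * Real.pi * (((K + 1) * (n' + 1) : ℕ) : ℝ) / 2 ^ m with hB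
    have hphv : ph m ((K + 1) * (n' + 1)) = Complex.exp ((B : ℂ) * Complex.I) := rfl
    have hDv : Ddiag m k = -Complex.I * Complex.exp ((A : ℂ) * Complex.I) := rfl
    have hprod : Ddiag m k * (Complex.exp ((B : ℂ) * Complex.I) * (-1))
        = -(-Complex.I * Complex.exp (((A + B : ℝ) : ℂ) * Complex.I)) := by
      rw [← exp_comb, hDv]
      ring
    rw [hphv, hprod, Complex.neg_re, re_aux]
    have hAB : A + B = -(Real.pi * ((n : ℕ) + 1 / 2) * (K + 1) / ((2 ^ m : ℕ) : ℝ)) := by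
      rw [hA, hB, hn']
      push_cast
      rw [pow_succ]
      have h2 : (2 : ℝ) ^ m ≠ 0 := by positivity
      field_simp
      ring
    rw [hAB, Real.sin_neg, neg_neg]



theorem dst_mem_BPBP_re (m : ℕ) (hm : 1 ≤ m) :
    ∃ (B₁ B₂ : Matrix (Fin (2 ^ m)) (Fin (2 ^ m)) ℂ) (σ₁ σ₂ : Equiv.Perm (Fin (2 ^ m))),
      IsButterflyMatrix m B₁ ∧ IsButterflyMatrix m B₂ ∧
      (Matrix.of fun k n : Fin (2 ^ m) =>
          Real.sin (Real.pi * ((n : ℕ) + 1 / 2) * ((k : ℕ) + 1) / (2 ^ m : ℕ))) =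
        (B₁ * σ₁.permMatrix ℂ * B₂ * σ₂.permMatrix ℂ).map Complex.re := by
  classical
  refine ⟨Matrix.diagonal (Ddiag m), Rmat m 0 * Matrix.diagonal (dvec m), 1,
    (sigE m hm).symm, ?_, ?_, ?_⟩
  · -- B₁ is a butterfly matrix
    refine ⟨fun t => if (t : ℕ) = 0 then Matrix.diagonal (Ddiag m) else 1, fun t => ?_, ?_⟩
    · intro i j hne _
      dsimp only
      split_ifs
      · exact Matrix.diagonal_apply_ne _ hne
      · exact Matrix.one_apply_ne hne
    · obtain ⟨m', rfl⟩ : ∃ m', m = m' + 1 := ⟨m - 1, by omega⟩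
      rw [List.ofFn_succ, List.prod_cons]
      have hhead : (if ((0 : Fin (m' + 1)) : ℕ) = 0 then Matrix.diagonal (Ddiag (m' + 1))
          else 1) = Matrix.diagonal (Ddiag (m' + 1)) := by
        rw [if_pos (Fin.val_zero _)]
      have htail : (fun i : Fin m' =>
            if (((i.succ : Fin (m' + 1))) : ℕ) = 0 then Matrix.diagonal (Ddiag (m' + 1)) else 1)
          = fun _ : Fin m' => (1 : Matrix (Fin (2 ^ (m' + 1))) (Fin (2 ^ (m' + 1))) ℂ) := by
        funext i
        rw [if_neg (by simp [Fin.val_succ])]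
      rw [hhead, htail]
      simp
  · -- B₂ is a butterfly matrix
    refine ⟨fun t => Mfac m (dvec m) (t : ℕ), fun t => Mfac_factor m (dvec m) (t : ℕ), ?_⟩
    have hp := prod_Mfac m hm (dvec m) m hm le_rfl
    rw [Nat.sub_self] at hp
    simp only [Nat.zero_add] at hp
    exact hp.symm
  · -- the entrywise identity
    have hσ1 : (Equiv.Perm.permMatrix ℂ (1 : Equiv.Perm (Fin (2 ^ m)))) = 1 := by
      show ((Equiv.toPEquiv (1 : Equiv.Perm (Fin (2 ^ m)))).toMatrix : Matrix _ _ ℂ) = 1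
      rw [show (1 : Equiv.Perm (Fin (2 ^ m))) = Equiv.refl _ from rfl, Equiv.toPEquiv_refl,
        PEquiv.toMatrix_refl]
    rw [hσ1, mul_one]
    have hperm : Matrix.diagonal (Ddiag m) * (Rmat m 0 * Matrix.diagonal (dvec m))
          * (Equiv.Perm.permMatrix ℂ ((sigE m hm).symm))
        = (Matrix.diagonal (Ddiag m) * (Rmat m 0 * Matrix.diagonal (dvec m))).submatrix id
            (sigE m hm) := by
      rw [show (Equiv.Perm.permMatrix ℂ ((sigE m hm).symm)) = (Equiv.toPEquiv ((sigE m hm).symm)).toMatrix from rfl,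
        PEquiv.mul_toMatrix_toPEquiv, Equiv.symm_symm]
    rw [hperm]
    ext k n
    rw [Matrix.map_apply, Matrix.submatrix_apply, Matrix.of_apply, id]
    exact entry_eq m hm k n
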